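/- Let (N,w) be a p-additive game with p < 0, let i ∈ N and S ⊂ T ⊆ N \ {i}. Then w(S ∪ {i}) − w(S) < w(T ∪ {i}) − w(T) if and only if the following three conditions hold: (i) S₊ is nonempty; (ii) S₊ ≠ T₊; (iii) w({i}) > 0. -/

import Mathlib

open Finset

variable {ι : Type*} [DecidableEq ι] [Fintype ι]

/-- The set of players in `S` with positive individual value. -/
noncomputable def Splus (w : Finset ι → ℝ) (S : Finset ι) : Finset ι :=
  S.filter fun i => 0 < w {i}

/-- A TU game `w` (with `w ∅ = 0`) is `p`-additive. -/
def PAdditive (p : ℝ) (w : Finset ι → ℝ) : Prop :=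
  w ∅ = 0 ∧ (∀ S, 0 ≤ w S) ∧
  (∀ S : Finset ι, (∀ i ∈ S, w {i} = 0) → w S = 0) ∧
  ∀ S : Finset ι, (Splus w S).Nonempty → w S ^ p = ∑ i ∈ Splus w S, w {i} ^ p

lemma keyMono (q c : ℝ) (hq : q < 0) (hc : 0 < c) :
    StrictMonoOn (fun x : ℝ => (x + c) ^ q - x ^ q) (Set.Ioi (0:ℝ)) := by
  have h := strictMonoOn_of_deriv_pos (convex_Ioi (0:ℝ))
    (f := fun x : ℝ => (x + c) ^ q - x ^ q) ?_ ?_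
  · exact h
  · intro x hx
    have hx0 : (0:ℝ) < x := hx
    exact ((Real.continuousAt_rpow_const _ q (Or.inl (by positivity))).comp
      (continuous_add_right c |>.continuousAt)).sub
      (Real.continuousAt_rpow_const _ q (Or.inl hx0.ne')) |>.continuousWithinAt
  · intro x hx
    rw [interior_Ioi] at hx
    have hx0 : (0:ℝ) < x := hx
    have h1 : HasDerivAt (fun x : ℝ => (x + c) ^ q) (q * (x + c) ^ (q - 1) * 1) x :=
      (Real.hasDerivAt_rpow_const (Or.inl (by positivity))).comp x
        ((hasDerivAt_id x).add_const c)
    have h2 : HasDerivAt (fun x : ℝ => x ^ q) (q * x ^ (q - 1)) x :=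
      Real.hasDerivAt_rpow_const (Or.inl hx0.ne')
    rw [show (fun x : ℝ => (x + c) ^ q - x ^ q) = (fun x : ℝ => (x + c) ^ q) - (fun x : ℝ => x ^ q) from rfl,
      (h1.sub h2).deriv]
    have : (x + c) ^ (q - 1) < x ^ (q - 1) :=
      Real.rpow_lt_rpow_of_neg hx0 (by linarith) (by linarith)
    nlinarith

theorem padditive_strict_marginal_iff (p : ℝ) (hp : p < 0)
    (w : Finset ι → ℝ) (hw : PAdditive p w) (i : ι) (S T : Finset ι)
    (hST : S ⊂ T) (hiT : i ∉ T) :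
    w (insert i S) - w S < w (insert i T) - w T ↔
      ((Splus w S).Nonempty ∧ Splus w S ≠ Splus w T ∧ 0 < w {i}) := by
  obtain ⟨h0, hnn, hzero, hsum⟩ := hw
  have hpne : p ≠ 0 := hp.ne
  have hq : p⁻¹ < 0 := inv_lt_zero.mpr hp
  have hiS : i ∉ S := fun h => hiT (hST.subset h)
  have hsub : Splus w S ⊆ Splus w T := filter_subset_filter _ hST.subset
  have wzero : ∀ A : Finset ι, Splus w A = ∅ → w A = 0 := by
    intro A hA
    apply hzero
    intro j hj
    by_contra hne
    have : j ∈ Splus w A := mem_filter.2 ⟨hj, lt_of_le_of_ne (hnn {j}) (Ne.symm hne)⟩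
    simp [hA] at this
  have wval : ∀ A : Finset ι, (Splus w A).Nonempty →
      w A = (∑ j ∈ Splus w A, w {j} ^ p) ^ p⁻¹ := by
    intro A hA
    rw [← hsum A hA, Real.rpow_rpow_inv (hnn A) hpne]
  have sumpos : ∀ A : Finset ι, (Splus w A).Nonempty →
      0 < ∑ j ∈ Splus w A, w {j} ^ p := by
    intro A hA
    exact Finset.sum_pos (fun j hj => Real.rpow_pos_of_pos (mem_filter.1 hj).2 p) hA
  have SplusInsert : ∀ (j : ι) (A : Finset ι), j ∉ A →
      Splus w (insert j A) = if 0 < w {j} then insert j (Splus w A) else Splus w A := by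
    intro j A _
    simp [Splus, filter_insert]
  by_cases hi : 0 < w {i}
  · -- w {i} > 0
    set c : ℝ := w {i} ^ p with hcdef
    have hc : 0 < c := Real.rpow_pos_of_pos hi p
    have hiSp : i ∉ Splus w S := fun h => hiS (mem_filter.1 h).1
    have hiTp : i ∉ Splus w T := fun h => hiT (mem_filter.1 h).1
    have hSins : Splus w (insert i S) = insert i (Splus w S) := by
      rw [SplusInsert i S hiS, if_pos hi]
    have hTins : Splus w (insert i T) = insert i (Splus w T) := by
      rw [SplusInsert i T hiT, if_pos hi]
    set a : ℝ := ∑ j ∈ Splus w S, w {j} ^ p with hadef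
    set b : ℝ := ∑ j ∈ Splus w T, w {j} ^ p with hbdef
    have hab : a ≤ b := Finset.sum_le_sum_of_subset_of_nonneg hsub
      (fun j _ _ => Real.rpow_nonneg (hnn {j}) p)
    have hwiS : w (insert i S) = (a + c) ^ p⁻¹ := by
      rw [wval (insert i S) (by rw [hSins]; exact insert_nonempty _ _), hSins,
        Finset.sum_insert hiSp]
      rw [hadef, hcdef, add_comm]
    have hwiT : w (insert i T) = (b + c) ^ p⁻¹ := by
      rw [wval (insert i T) (by rw [hTins]; exact insert_nonempty _ _), hTins,
        Finset.sum_insert hiTp]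
      rw [hbdef, hcdef, add_comm]
    by_cases hSp : (Splus w S).Nonempty
    · have hTp : (Splus w T).Nonempty := hSp.mono hsub
      have ha : 0 < a := sumpos S hSp
      have hb : 0 < b := sumpos T hTp
      have hwS : w S = a ^ p⁻¹ := wval S hSp
      have hwT : w T = b ^ p⁻¹ := wval T hTp
      rw [hwiS, hwiT, hwS, hwT]
      have hmono := keyMono p⁻¹ c hq hc
      constructor
      · intro h
        refine ⟨hSp, ?_, hi⟩
        intro heq
        have hab' : a = b := by rw [hadef, hbdef, heq]
        rw [hab'] at h
        exact lt_irrefl _ h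
      · rintro ⟨-, hne, -⟩
        have hss : Splus w S ⊂ T.filter fun i => 0 < w {i} := ssubset_of_subset_of_ne hsub hne
        obtain ⟨j, hjT, hjS⟩ := exists_of_ssubset hss
        have haltb : a < b := Finset.sum_lt_sum_of_subset hsub hjT hjS
          (Real.rpow_pos_of_pos (mem_filter.1 hjT).2 p)
          (fun k _ _ => Real.rpow_nonneg (hnn {k}) p)
        exact hmono (Set.mem_Ioi.2 ha) (Set.mem_Ioi.2 hb) haltb
    · -- Splus w S empty
      have hSe : Splus w S = ∅ := not_nonempty_iff_eq_empty.1 hSp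
      have hwS : w S = 0 := wzero S hSe
      have ha0 : a = 0 := by rw [hadef, hSe]; simp
      have hwiSval : w (insert i S) = w {i} := by
        rw [hwiS, ha0, zero_add, hcdef, Real.rpow_rpow_inv (hnn {i}) hpne]
      have hRHSfalse : ¬ ((Splus w S).Nonempty ∧ Splus w S ≠ Splus w T ∧ 0 < w {i}) := by
        rintro ⟨h, -, -⟩; exact hSp h
      simp only [hRHSfalse, iff_false]
      intro hlt
      by_cases hTp : (Splus w T).Nonempty
      · have hb : 0 < b := sumpos T hTp
        have hwT : w T = b ^ p⁻¹ := wval T hTp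
        have h1 : (b + c) ^ p⁻¹ < c ^ p⁻¹ :=
          Real.rpow_lt_rpow_of_neg hc (by linarith) hq
        have h2 : c ^ p⁻¹ = w {i} := by rw [hcdef, Real.rpow_rpow_inv (hnn {i}) hpne]
        have h3 : 0 < b ^ p⁻¹ := Real.rpow_pos_of_pos hb _
        rw [hwiSval, hwS, hwiT, hwT] at hlt
        linarith
      · have hTe : Splus w T = ∅ := not_nonempty_iff_eq_empty.1 hTp
        have hwT : w T = 0 := wzero T hTe
        have hb0 : b = 0 := by rw [hbdef, hTe]; simp
        have hwiTval : w (insert i T) = w {i} := by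
          rw [hwiT, hb0, zero_add, hcdef, Real.rpow_rpow_inv (hnn {i}) hpne]
        rw [hwiSval, hwS, hwiTval, hwT] at hlt
        linarith
  · -- w {i} = 0
    have winsert : ∀ A : Finset ι, i ∉ A → w (insert i A) = w A := by
      intro A hiA
      have hins : Splus w (insert i A) = Splus w A := by
        rw [SplusInsert i A hiA, if_neg hi]
      by_cases hA : (Splus w A).Nonempty
      · rw [wval (insert i A) (by rw [hins]; exact hA), wval A hA, hins]
      · have hAe : Splus w A = ∅ := not_nonempty_iff_eq_empty.1 hA
        rw [wzero A hAe, wzero (insert i A) (by rw [hins, hAe])]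
    rw [winsert S hiS, winsert T hiT]
    constructor
    · intro h; linarith
    · rintro ⟨-, -, h3⟩; exact absurd h3 hi
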